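/- Let B and C be 2×2 real matrices with det B = det C = 1, let m ≥ 1 be a natural number, let ℓ ∈ {−1, 0} and let ε ∈ {1, −1}. Then S_{m−1−ℓ}(tr B)·( tr(C·B^{m−1}) + ε·tr(C·B^{1+ℓ}) ) = ( S_{m−2−ℓ}(tr B) + ε )·( tr(C·B^m) + ε·tr(C·B^ℓ) ). -/

import Mathlib

/-- Auxiliary: the dilated Chebyshev polynomials of the second kind with
nonnegative index, `chebAux n x = S_n(x)`. -/
noncomputable def chebAux : ℕ → ℝ → ℝ
  | 0, _ => 1
  | 1, x => x
  | (n + 2), x => x * chebAux (n + 1) x - chebAux n x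

/-- The dilated Chebyshev polynomials of the second kind `S_n`, indexed by `ℤ`,
with `S_{-1} = 0`, `S_0 = 1` and `S_n(x) = x·S_{n-1}(x) − S_{n-2}(x)` for `n ≥ 1`. -/
noncomputable def chebS (n : ℤ) (x : ℝ) : ℝ :=
  if 0 ≤ n then chebAux n.toNat x else 0

/-- The trace of an element of `SL(2,ℝ)`, viewed as a `2×2` real matrix. -/
noncomputable def trSL (A : Matrix.SpecialLinearGroup (Fin 2) ℝ) : ℝ :=
  Matrix.trace (A : Matrix (Fin 2) (Fin 2) ℝ)

noncomputable def Scheb (n : ℤ) (x : ℝ) : ℝ := chebS n x - chebS (-n - 2) x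

lemma chebS_neg {n : ℤ} (h : n < 0) (x : ℝ) : chebS n x = 0 := by
  simp [chebS, not_le.2 h]

lemma Scheb_natCast (k : ℕ) (x : ℝ) : Scheb (k : ℤ) x = chebAux k x := by
  have h : (-(k:ℤ) - 2) < 0 := by omega
  rw [Scheb, chebS_neg h]
  simp [chebS]

lemma chebS_eq_Scheb {n : ℤ} (h : -1 ≤ n) (x : ℝ) : chebS n x = Scheb n x := by
  have h2 : (-n - 2) < 0 := by omega
  simp [Scheb, chebS_neg h2]

lemma Scheb_neg (n : ℤ) (x : ℝ) : Scheb (-n - 2) x = -Scheb n x := by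
  have : -(-n-2) - 2 = n := by ring
  rw [Scheb, Scheb, this]; ring

lemma Scheb_rec (n : ℤ) (x : ℝ) : Scheb (n + 2) x = x * Scheb (n + 1) x - Scheb n x := by
  have aux : ∀ m : ℤ, -2 ≤ m → Scheb (m + 2) x = x * Scheb (m + 1) x - Scheb m x := by
    intro m hm
    rcases lt_or_ge m 0 with h | h
    · interval_cases m <;>
        norm_num [Scheb, chebS, chebAux]
    · obtain ⟨k, rfl⟩ := Int.eq_ofNat_of_zero_le h
      have e1 : (k:ℤ) + 2 = ((k+2 : ℕ) : ℤ) := by push_cast; ring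
      have e2 : (k:ℤ) + 1 = ((k+1 : ℕ) : ℤ) := by push_cast; ring
      rw [e1, e2, Scheb_natCast, Scheb_natCast, Scheb_natCast]
      rfl
  rcases le_or_gt (-2) n with h | h
  · exact aux n h
  · have h1 := aux (-n - 4) (by omega)
    have e1 : (-n - 4) + 2 = -n - 2 := by ring
    have e2 : (-n - 4) + 1 = -(n+1) - 2 := by ring
    have e3 : (-n - 4) = -(n+2) - 2 := by ring
    rw [e1, e2, e3, Scheb_neg, Scheb_neg, Scheb_neg] at h1
    linarith [h1]

lemma Scheb_neg_one (x : ℝ) : Scheb (-1) x = 0 := by norm_num [Scheb, chebS]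
lemma Scheb_zero (x : ℝ) : Scheb 0 x = 1 := by norm_num [Scheb, chebS, chebAux]
lemma Scheb_neg_two (x : ℝ) : Scheb (-2) x = -1 := by norm_num [Scheb, chebS, chebAux]
lemma Scheb_neg_three (x : ℝ) : Scheb (-3) x = -x := by norm_num [Scheb, chebS, chebAux]

lemma Scheb_cassini (n : ℤ) (x : ℝ) :
    Scheb (n + 1) x * Scheb (n - 1) x = Scheb n x * Scheb n x - 1 := by
  induction n using Int.induction_on with
  | zero => simp [Scheb_neg_one, Scheb_zero]
  | succ k ih =>
      have hr := Scheb_rec (k - 1) x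
      rw [show (k:ℤ) - 1 + 2 = k + 1 from by ring, show (k:ℤ) - 1 + 1 = k from by ring] at hr
      rw [show (k:ℤ) + 1 + 1 = k + 2 from by ring, show (k:ℤ) + 1 - 1 = k from by ring,
        Scheb_rec]
      linear_combination (-Scheb ((k:ℤ)+1) x) * hr + ih
  | pred k ih =>
      have hr := Scheb_rec (-(k:ℤ) - 2) x
      rw [show -(k:ℤ) - 2 + 2 = -k from by ring, show -(k:ℤ) - 2 + 1 = -k - 1 from by ring] at hr
      have hr2 := Scheb_rec (-(k:ℤ) - 1) x
      rw [show -(k:ℤ) - 1 + 2 = -k + 1 from by ring,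
        show -(k:ℤ) - 1 + 1 = -k from by ring] at hr2
      rw [show -(k:ℤ) - 1 + 1 = -k from by ring, show -(k:ℤ) - 1 - 1 = -k - 2 from by ring]
      linear_combination ih - Scheb (-(k:ℤ)-1) x * hr2 + Scheb (-(k:ℤ)) x * hr

lemma Scheb_cat (n : ℤ) (x : ℝ) :
    Scheb n x * Scheb (n + 1) x - Scheb (n + 2) x * Scheb (n - 1) x = x := by
  have h1 := Scheb_rec n x
  have h2 := Scheb_rec (n - 1) x
  rw [show n - 1 + 2 = n + 1 from by ring, show n - 1 + 1 = n from by ring] at h2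
  have h3 := Scheb_cassini n x
  linear_combination (-Scheb (n-1) x) * h1 + Scheb n x * h2 - x * h3


lemma sq_eq_of_det_one (A : Matrix (Fin 2) (Fin 2) ℝ) (h : A.det = 1) :
    A * A = A.trace • A - 1 := by
  rw [Matrix.det_fin_two] at h
  ext i j
  fin_cases i <;> fin_cases j <;>
    simp [Matrix.mul_apply, Fin.sum_univ_two, Matrix.trace_fin_two, Matrix.sub_apply,
      Matrix.smul_apply, Matrix.one_apply, smul_eq_mul] <;> first | ring1 | linear_combination -h

lemma trSL_rec (B C : Matrix.SpecialLinearGroup (Fin 2) ℝ) (n : ℤ) :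
    trSL (C * B ^ (n + 2)) = trSL B * trSL (C * B ^ (n + 1)) - trSL (C * B ^ n) := by
  have hB : ((B : Matrix (Fin 2) (Fin 2) ℝ)) * B = (Matrix.trace (B : Matrix (Fin 2) (Fin 2) ℝ)) • (B : Matrix (Fin 2) (Fin 2) ℝ) - 1 :=
    sq_eq_of_det_one _ B.prop
  have e2 : B ^ (n + 2) = B ^ n * B * B := by
    rw [show (n:ℤ) + 2 = n + 1 + 1 from by ring, zpow_add_one, zpow_add_one]
  have e1 : B ^ (n + 1) = B ^ n * B := zpow_add_one B n
  rw [e1, e2, trSL, trSL, trSL, trSL]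
  simp only [Matrix.SpecialLinearGroup.coe_mul, mul_assoc, hB]
  simp [Matrix.mul_sub, Matrix.mul_smul, Matrix.trace_sub, Matrix.trace_smul, smul_eq_mul,
    mul_assoc, Matrix.smul_mul]

lemma trSL_formula (B C : Matrix.SpecialLinearGroup (Fin 2) ℝ) (n : ℤ) :
    trSL (C * B ^ n) =
      Scheb (n - 1) (trSL B) * trSL (C * B) - Scheb (n - 2) (trSL B) * trSL C := by
  set x := trSL B with hx
  set a := trSL (C * B) with ha
  set c := trSL C with hc
  suffices h : ∀ n : ℤ,
      (trSL (C * B ^ n) = Scheb (n - 1) x * a - Scheb (n - 2) x * c) ∧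
      (trSL (C * B ^ (n + 1)) = Scheb (n + 1 - 1) x * a - Scheb (n + 1 - 2) x * c) from (h n).1
  clear n
  intro n
  induction n using Int.induction_on with
  | zero =>
      constructor
      · rw [zpow_zero, mul_one]
        norm_num [Scheb_neg_one, Scheb_neg_two, hc]
      · norm_num [Scheb_zero, Scheb_neg_one, ha]
  | succ k ih =>
      obtain ⟨h1, h2⟩ := ih
      refine ⟨h2, ?_⟩
      have htr := trSL_rec B C k
      have hrec1 := Scheb_rec ((k:ℤ) - 1) x
      rw [show (k:ℤ) - 1 + 2 = k + 1 from by ring, show (k:ℤ) - 1 + 1 = k from by ring] at hrec1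
      have hrec2 := Scheb_rec ((k:ℤ) - 2) x
      rw [show (k:ℤ) - 2 + 2 = k from by ring, show (k:ℤ) - 2 + 1 = k - 1 from by ring] at hrec2
      rw [show (k:ℤ) + 1 + 1 - 1 = k + 1 from by ring,
        show (k:ℤ) + 1 + 1 - 2 = k from by ring, show (k:ℤ) + 1 + 1 = k + 2 from by ring]
      rw [show (k:ℤ) + 1 - 1 = k from by ring, show (k:ℤ) + 1 - 2 = k - 1 from by ring] at h2
      linear_combination htr + x * h2 - h1 - a * hrec1 + c * hrec2
  | pred k ih =>
      obtain ⟨h1, h2⟩ := ih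
      rw [show -(k:ℤ) + 1 - 1 = -k from by ring,
        show -(k:ℤ) + 1 - 2 = -k - 1 from by ring] at h2
      constructor
      · have htr := trSL_rec B C (-(k:ℤ) - 1)
        rw [show -(k:ℤ) - 1 + 2 = -k + 1 from by ring,
          show -(k:ℤ) - 1 + 1 = -k from by ring] at htr
        have hrec1 := Scheb_rec (-(k:ℤ) - 2) x
        rw [show -(k:ℤ) - 2 + 2 = -k from by ring,
          show -(k:ℤ) - 2 + 1 = -k - 1 from by ring] at hrec1
        have hrec2 := Scheb_rec (-(k:ℤ) - 3) x
        rw [show -(k:ℤ) - 3 + 2 = -k - 1 from by ring,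
          show -(k:ℤ) - 3 + 1 = -k - 2 from by ring] at hrec2
        rw [show -(k:ℤ) - 1 - 1 = -k - 2 from by ring,
          show -(k:ℤ) - 1 - 2 = -k - 3 from by ring]
        linear_combination htr + x * h1 - h2 - a * hrec1 + c * hrec2
      · rw [show -(k:ℤ) - 1 + 1 = -k from by ring]
        exact h1


/-- For `B, C` of determinant `1`, `m ≥ 1`, `ℓ ∈ {−1, 0}` and
`ε ∈ {1, −1}`:
`S_{m−1−ℓ}(tr B)·(tr(C·B^{m−1}) + ε·tr(C·B^{1+ℓ}))
  = (S_{m−2−ℓ}(tr B) + ε)·(tr(C·B^m) + ε·tr(C·B^ℓ))`. -/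
theorem trace_chebyshev_identity (B C : Matrix.SpecialLinearGroup (Fin 2) ℝ)
    (m : ℕ) (hm : 1 ≤ m) (ℓ : ℤ) (hℓ : ℓ = -1 ∨ ℓ = 0) (ε : ℝ) (hε : ε = 1 ∨ ε = -1) :
    chebS ((m : ℤ) - 1 - ℓ) (trSL B) *
        (trSL (C * B ^ ((m : ℤ) - 1)) + ε * trSL (C * B ^ (1 + ℓ))) =
      (chebS ((m : ℤ) - 2 - ℓ) (trSL B) + ε) *
        (trSL (C * B ^ (m : ℤ)) + ε * trSL (C * B ^ ℓ)) := by
  have hm' : (1:ℤ) ≤ (m:ℤ) := by exact_mod_cast hm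
  have hε2 : ε ^ 2 = 1 := by rcases hε with rfl | rfl <;> norm_num
  have f1 := trSL_formula B C ((m:ℤ) - 1)
  rw [show (m:ℤ) - 1 - 1 = (m:ℤ) - 2 from by ring,
    show (m:ℤ) - 1 - 2 = (m:ℤ) - 3 from by ring] at f1
  have f3 := trSL_formula B C ((m:ℤ))
  rcases hℓ with rfl | rfl
  · -- ℓ = -1
    rw [show (m:ℤ) - 1 - -1 = (m:ℤ) from by ring, show (m:ℤ) - 2 - -1 = (m:ℤ) - 1 from by ring,
      show (1:ℤ) + -1 = 0 from by norm_num]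
    have f2 := trSL_formula B C (0:ℤ)
    rw [show (0:ℤ) - 1 = -1 from by norm_num, show (0:ℤ) - 2 = -2 from by norm_num] at f2
    have f4 := trSL_formula B C (-1:ℤ)
    rw [show (-1:ℤ) - 1 = -2 from by norm_num, show (-1:ℤ) - 2 = -3 from by norm_num] at f4
    rw [chebS_eq_Scheb (show (-1:ℤ) ≤ (m:ℤ) by omega),
      chebS_eq_Scheb (show (-1:ℤ) ≤ (m:ℤ) - 1 by omega), f1, f2, f3, f4,
      Scheb_neg_one, Scheb_neg_two, Scheb_neg_three]
    have hcas := Scheb_cassini ((m:ℤ) - 1) (trSL B)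
    rw [show (m:ℤ) - 1 + 1 = (m:ℤ) from by ring,
      show (m:ℤ) - 1 - 1 = (m:ℤ) - 2 from by ring] at hcas
    have hcat := Scheb_cat ((m:ℤ) - 2) (trSL B)
    rw [show (m:ℤ) - 2 + 1 = (m:ℤ) - 1 from by ring, show (m:ℤ) - 2 + 2 = (m:ℤ) from by ring,
      show (m:ℤ) - 2 - 1 = (m:ℤ) - 3 from by ring] at hcat
    have hrec := Scheb_rec ((m:ℤ) - 2) (trSL B)
    rw [show (m:ℤ) - 2 + 2 = (m:ℤ) from by ring,
      show (m:ℤ) - 2 + 1 = (m:ℤ) - 1 from by ring] at hrec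
    linear_combination trSL (C * B) * hcas + trSL C * hcat + ε * trSL C * hrec +
      (trSL (C * B) - trSL B * trSL C) * hε2
  · -- ℓ = 0
    rw [show (m:ℤ) - 1 - 0 = (m:ℤ) - 1 from by ring,
      show (m:ℤ) - 2 - 0 = (m:ℤ) - 2 from by ring, show (1:ℤ) + 0 = 1 from by norm_num]
    have f2 := trSL_formula B C (1:ℤ)
    rw [show (1:ℤ) - 1 = 0 from by norm_num, show (1:ℤ) - 2 = -1 from by norm_num] at f2
    have f4 := trSL_formula B C (0:ℤ)
    rw [show (0:ℤ) - 1 = -1 from by norm_num, show (0:ℤ) - 2 = -2 from by norm_num] at f4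
    rw [chebS_eq_Scheb (show (-1:ℤ) ≤ (m:ℤ) - 1 by omega),
      chebS_eq_Scheb (show (-1:ℤ) ≤ (m:ℤ) - 2 by omega), f1, f2, f3, f4,
      Scheb_zero, Scheb_neg_one, Scheb_neg_two]
    have hcas := Scheb_cassini ((m:ℤ) - 2) (trSL B)
    rw [show (m:ℤ) - 2 + 1 = (m:ℤ) - 1 from by ring,
      show (m:ℤ) - 2 - 1 = (m:ℤ) - 3 from by ring] at hcas
    linear_combination (-(trSL C)) * hcas + (-(trSL C)) * hε2
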